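/- For all real numbers a > 0 and b > 0, (log b − log a)² ≤ (b − a)²/(a·b). -/

import Mathlib

open Real

lemma aux_cosh_ge (x : ℝ) : 1 + x ^ 2 / 2 ≤ Real.cosh x := by
  wlog hx : 0 ≤ x with H
  · have := H (-x) (by linarith)
    simpa [Real.cosh_neg] using this
  have key : MonotoneOn (fun y : ℝ => Real.cosh y - (1 + y ^ 2 / 2)) (Set.Ici 0) := by
    apply monotoneOn_of_deriv_nonneg (convex_Ici 0)
    · exact (Real.continuous_cosh.sub (by continuity)).continuousOn
    · intro y hy
      exact (Real.differentiable_cosh y).sub (by fun_prop : DifferentiableAt ℝ (fun y : ℝ => 1 + y ^ 2 / 2) y) |>.differentiableWithinAt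
    · intro y hy
      simp only [interior_Ici, Set.mem_Ioi] at hy
      have : deriv (fun y : ℝ => Real.cosh y - (1 + y ^ 2 / 2)) y = Real.sinh y - y := by
        rw [deriv_fun_sub (Real.differentiable_cosh y) (by fun_prop : DifferentiableAt ℝ (fun y : ℝ => 1 + y ^ 2 / 2) y), Real.deriv_cosh, deriv_const_add, deriv_div_const, deriv_pow_field]
        ring
      rw [this]
      have := (Real.self_lt_sinh_iff.2 hy).le
      linarith
  have := key (Set.self_mem_Ici) (Set.mem_Ici.2 hx) hx
  simp at this
  linarith

/-- For all real numbers `a > 0` and `b > 0`, `(log b - log a)² ≤ (b - a)² / (a * b)`. -/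
theorem stmt_11 (a b : ℝ) (ha : 0 < a) (hb : 0 < b) :
    (Real.log b - Real.log a) ^ 2 ≤ (b - a) ^ 2 / (a * b) := by
  set L := Real.log b - Real.log a with hL
  have h1 : Real.exp L = b / a := by
    rw [hL, Real.exp_sub, Real.exp_log hb, Real.exp_log ha]
  have h2 : Real.exp (-L) = a / b := by
    rw [Real.exp_neg, h1]; field_simp
  have hcosh := aux_cosh_ge L
  rw [Real.cosh_eq, h1, h2] at hcosh
  have : (b - a) ^ 2 / (a * b) = b / a + a / b - 2 := by
    field_simp; ring
  rw [this]
  linarith
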